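/- Let n be a natural number, G an n×n real matrix, and let V, α, γ, a be real numbers with α + γ ≠ 0. Assume I + Vα·G is invertible and that the matrix M := I − (Vα²/(α + γ))·G·(I + Vα·G)⁻¹ is invertible. Suppose vectors U, Y, ν ∈ ℝⁿ satisfy the two relations ν = (Vα·G)·(U − ν) and (α + γ)·U = a·Y + α·ν. Then U = 𝒢·Y, where 𝒢 = M⁻¹·(a/(α + γ))·I is the communication gain matrix, i.e., 𝒢 = (I − (Vα²/(α + γ))·G·(I + Vα·G)⁻¹)⁻¹·(a/(α + γ)). -/
import Mathlib

open Matrix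

theorem communication_gain_matrix
    (n : ℕ) (G : Matrix (Fin n) (Fin n) ℝ)
    (V α γ a : ℝ) (hαγ : α + γ ≠ 0)
    (h1 : IsUnit (1 + (V * α) • G))
    (h2 : IsUnit ((1 : Matrix (Fin n) (Fin n) ℝ) -
        (V * α ^ 2 / (α + γ)) • (G * (1 + (V * α) • G)⁻¹)))
    (U Y ν : Fin n → ℝ)
    (hν : ν = ((V * α) • G).mulVec (U - ν))
    (hU : (α + γ) • U = a • Y + α • ν) :
    U = (((1 : Matrix (Fin n) (Fin n) ℝ) -
        (V * α ^ 2 / (α + γ)) • (G * (1 + (V * α) • G)⁻¹))⁻¹ *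
        (a / (α + γ)) • (1 : Matrix (Fin n) (Fin n) ℝ)).mulVec Y := by
  set A : Matrix (Fin n) (Fin n) ℝ := (V * α) • G with hA
  set B : Matrix (Fin n) (Fin n) ℝ := 1 + A with hB
  set M : Matrix (Fin n) (Fin n) ℝ :=
    (1 : Matrix (Fin n) (Fin n) ℝ) - (V * α ^ 2 / (α + γ)) • (G * B⁻¹) with hM
  have hBd := (Matrix.isUnit_iff_isUnit_det B).mp h1
  have hMd := (Matrix.isUnit_iff_isUnit_det M).mp h2
  have hBinv : B * B⁻¹ = 1 := Matrix.mul_nonsing_inv _ hBd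
  have hinvB : B⁻¹ * B = 1 := Matrix.nonsing_inv_mul _ hBd
  have hBG : G * B = B * G := by
    simp [hB, hA, mul_add, add_mul, Matrix.mul_smul, Matrix.smul_mul, mul_one, one_mul, Matrix.mul_one, Matrix.one_mul]
  have hcomm : G * B⁻¹ = B⁻¹ * G := by
    calc G * B⁻¹ = B⁻¹ * (G * B) * B⁻¹ := by rw [hBG, ← Matrix.mul_assoc, hinvB, Matrix.one_mul]
    _ = B⁻¹ * G := by rw [Matrix.mul_assoc B⁻¹, Matrix.mul_assoc, hBinv, Matrix.mul_one]
  have h3 : ν + A.mulVec ν = A.mulVec U := by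
    nth_rewrite 1 [hν]
    rw [Matrix.mulVec_sub]
    abel
  have hBν : B.mulVec ν = A.mulVec U := by
    rw [hB, Matrix.add_mulVec, Matrix.one_mulVec]; exact h3
  have hν2 : ν = (B⁻¹ * A).mulVec U := by
    rw [← Matrix.mulVec_mulVec, ← hBν, Matrix.mulVec_mulVec, hinvB, Matrix.one_mulVec]
  have hU2 : U = (a / (α + γ)) • Y + (α / (α + γ)) • ν := by
    have h := congrArg (fun x => (α + γ)⁻¹ • x) hU
    simp only [smul_smul, smul_add, inv_mul_cancel₀ hαγ, one_smul] at h
    rw [h, div_eq_inv_mul, div_eq_inv_mul]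
  have hMU : M.mulVec U = (a / (α + γ)) • Y := by
    rw [hM, Matrix.sub_mulVec, Matrix.one_mulVec, Matrix.smul_mulVec, hcomm]
    have hν3 : (α / (α + γ)) • ν = (V * α ^ 2 / (α + γ)) • (B⁻¹ * G).mulVec U := by
      rw [hν2, hA, Matrix.mul_smul, Matrix.smul_mulVec, smul_smul]
      ring_nf
    rw [← hν3]
    rw [hU2]; abel
  have hMinv : M⁻¹ * M = 1 := Matrix.nonsing_inv_mul _ hMd
  calc U = (M⁻¹ * M).mulVec U := by rw [hMinv, Matrix.one_mulVec]
  _ = M⁻¹.mulVec (M.mulVec U) := by rw [Matrix.mulVec_mulVec]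
  _ = M⁻¹.mulVec ((a / (α + γ)) • Y) := by rw [hMU]
  _ = (M⁻¹ * (a / (α + γ)) • 1).mulVec Y := by
      rw [Matrix.mul_smul, Matrix.mul_one, Matrix.smul_mulVec, Matrix.mulVec_smul]
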